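/- Let T be a left-continuous triangular norm on [0,1] (commutative, associative, monotone in each variable, with neutral element 1). Then the binary operation on Δ⁺ defined by (F ⋆_T L)(t) := sup_{s+u=t} T(F(s), L(u)) is a triangle function: it maps Δ⁺ × Δ⁺ to Δ⁺, is commutative, associative, nondecreasing in each argument, and has H₀ as neutral element. -/

import Mathlib

open Filter Topology

noncomputable section

/-- `Δ⁺`: distribution functions `F : [-∞,∞] → [0,1]`, nondecreasing, left-continuous
on `ℝ`, with `F(-∞)=0`, `F(+∞)=1` and `F(0)=0`. -/
def IsDistFun (F : EReal → ℝ) : Prop :=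
  Monotone F ∧ (∀ t, F t ∈ Set.Icc (0:ℝ) 1) ∧
  (∀ x : ℝ, ContinuousWithinAt F (Set.Iio (x : EReal)) (x : EReal)) ∧
  F ⊥ = 0 ∧ F ⊤ = 1 ∧ F (0 : EReal) = 0

/-- The step function `H_a`. -/
def Hstep (a : ℝ) : EReal → ℝ := fun t => if t ≤ (a : EReal) then 0 else 1

/-- `H₀`. -/
def H0 : EReal → ℝ := Hstep 0

/-- `H_∞`. -/
def Hinf : EReal → ℝ := fun t => if t = ⊤ then 1 else 0

/-- The condition `A(F,G;h)` : for all `t ∈ (0,1/h)`, `G(t) ≤ F(t+h)+h`. -/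
def levyCond (F G : EReal → ℝ) (h : ℝ) : Prop :=
  ∀ t : ℝ, 0 < t → t < 1 / h → G (t : EReal) ≤ F ((t + h : ℝ) : EReal) + h

def levySet (F G : EReal → ℝ) : Set ℝ :=
  {h : ℝ | 0 < h ∧ h ≤ 1 ∧ levyCond F G h ∧ levyCond G F h}

/-- The modified Lévy distance. -/
def dL (F G : EReal → ℝ) : ℝ := sInf (levySet F G)

/-- Weak convergence: pointwise convergence at each (real) continuity point of the limit. -/
def WeakConv (F : ℕ → EReal → ℝ) (G : EReal → ℝ) : Prop :=
  ∀ t : ℝ, ContinuousAt G (t : EReal) →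
    Tendsto (fun n => F n (t : EReal)) atTop (𝓝 (G (t : EReal)))

abbrev TriOp := (EReal → ℝ) → (EReal → ℝ) → (EReal → ℝ)

/-- A triangle function on `Δ⁺`. -/
def IsTriangleFn (star : TriOp) : Prop :=
  (∀ F L, IsDistFun F → IsDistFun L → IsDistFun (star F L)) ∧
  (∀ F L, IsDistFun F → IsDistFun L → star F L = star L F) ∧
  (∀ F L K, IsDistFun F → IsDistFun L → IsDistFun K →
    star F (star L K) = star (star F L) K) ∧
  (∀ F, IsDistFun F → star F H0 = F) ∧
  (∀ F L K, IsDistFun F → IsDistFun L → IsDistFun K → F ≤ L → star F K ≤ star L K)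

/-- `⋆` is continuous with respect to weak convergence. -/
def StarContinuous (star : TriOp) : Prop :=
  ∀ (Fn Ln : ℕ → EReal → ℝ) (F L : EReal → ℝ),
    (∀ n, IsDistFun (Fn n)) → (∀ n, IsDistFun (Ln n)) →
    IsDistFun F → IsDistFun L →
    WeakConv Fn F → WeakConv Ln L →
    WeakConv (fun n => star (Fn n) (Ln n)) (star F L)

/-- `⋆` is sup-continuous. -/
def StarSupContinuous (star : TriOp) : Prop :=
  ∀ (I : Type) (_ : Nonempty I) (F : I → EReal → ℝ) (L : EReal → ℝ),
    (∀ i, IsDistFun (F i)) → IsDistFun L →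
    (fun t => ⨆ i, star (F i) L t) = star (fun t => ⨆ i, F i t) L

/-- A probabilistic metric space `(G, D, ⋆)`. -/
structure PMSpace (G : Type) where
  star : TriOp
  D : G → G → EReal → ℝ
  star_tri : IsTriangleFn star
  D_mem : ∀ p q, IsDistFun (D p q)
  D_eq_iff : ∀ p q, D p q = H0 ↔ p = q
  D_symm : ∀ p q, D p q = D q p
  D_tri : ∀ p q r, star (D p q) (D q r) ≤ D p r

/-- Probabilistic 1-Lipschitz map. -/
def PLip {G : Type} (M : PMSpace G) (f : G → EReal → ℝ) : Prop :=
  (∀ x, IsDistFun (f x)) ∧ ∀ x y, M.star (M.D x y) (f y) ≤ f x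

/-- Probabilistically continuous map. -/
def PCont {G : Type} (M : PMSpace G) (f : G → EReal → ℝ) : Prop :=
  (∀ x, IsDistFun (f x)) ∧
  ∀ (z : G) (zn : ℕ → G),
    WeakConv (fun n => M.D (zn n) z) H0 →
    WeakConv (fun n => f (zn n)) (f z)

/-- The uniform modified Lévy distance `d_∞`. -/
def dInf {G : Type} (f g : G → EReal → ℝ) : ℝ := ⨆ x, dL (f x) (g x)

/-- Probabilistic Cauchy sequence: `D(z_n,z_p)(t) → H₀(t)` for all real `t`. -/
def PCauchy {G : Type} (M : PMSpace G) (z : ℕ → G) : Prop :=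
  ∀ t : ℝ, Tendsto (fun np : ℕ × ℕ => M.D (z np.1) (z np.2) (t : EReal))
    atTop (𝓝 (H0 (t : EReal)))

def PConvTo {G : Type} (M : PMSpace G) (z : ℕ → G) (w : G) : Prop :=
  ∀ t : ℝ, Tendsto (fun n => M.D (z n) w (t : EReal)) atTop (𝓝 (H0 (t : EReal)))

def PComplete {G : Type} (M : PMSpace G) : Prop :=
  ∀ z : ℕ → G, PCauchy M z → ∃ w, PConvTo M z w

/-- Compactness: complete and every strong `t`-neighborhood cover has a finite subcover. -/
def PCompact {G : Type} (M : PMSpace G) : Prop :=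
  PComplete M ∧ ∀ t : ℝ, 0 < t → ∃ A : Finset G, ∀ x : G, ∃ a ∈ A, M.D a x (t : EReal) > 1 - t

/-- A triangular norm on `[0,1]`. -/
def IsTNorm (T : ℝ → ℝ → ℝ) : Prop :=
  (∀ x ∈ Set.Icc (0:ℝ) 1, ∀ y ∈ Set.Icc (0:ℝ) 1, T x y ∈ Set.Icc (0:ℝ) 1) ∧
  (∀ x y, T x y = T y x) ∧
  (∀ x y z, T x (T y z) = T (T x y) z) ∧
  (∀ x y z, y ≤ z → T x y ≤ T x z) ∧
  (∀ x, T x 1 = x)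

/-- Left-continuity of `T`. -/
def LeftContTNorm (T : ℝ → ℝ → ℝ) : Prop :=
  ∀ x y : ℝ, ContinuousWithinAt (fun p : ℝ × ℝ => T p.1 p.2)
    (Set.Iio x ×ˢ Set.Iio y) (x, y)

/-- `(F ⋆_T L)(t) = sup_{s+u=t} T(F(s), L(u))`. -/
def starT (T : ℝ → ℝ → ℝ) : TriOp := fun F L t =>
  sSup {r : ℝ | ∃ s u : EReal, s + u = t ∧ r = T (F s) (L u)}

/-! ### Auxiliary material for `stmt1` -/

section StarTAux

variable {T : ℝ → ℝ → ℝ}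

lemma TN.mem (hT : IsTNorm T) {x y : ℝ} (hx : x ∈ Set.Icc (0:ℝ) 1)
    (hy : y ∈ Set.Icc (0:ℝ) 1) : T x y ∈ Set.Icc (0:ℝ) 1 := hT.1 x hx y hy

lemma TN.comm (hT : IsTNorm T) (x y : ℝ) : T x y = T y x := hT.2.1 x y

lemma TN.assoc (hT : IsTNorm T) (x y z : ℝ) : T x (T y z) = T (T x y) z := hT.2.2.1 x y z

lemma TN.mono2 (hT : IsTNorm T) (x : ℝ) {y z : ℝ} (h : y ≤ z) : T x y ≤ T x z :=
  hT.2.2.2.1 x y z h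

lemma TN.one (hT : IsTNorm T) (x : ℝ) : T x 1 = x := hT.2.2.2.2 x

lemma TN.mono1 (hT : IsTNorm T) {x y : ℝ} (h : x ≤ y) (z : ℝ) : T x z ≤ T y z := by
  rw [TN.comm hT x z, TN.comm hT y z]; exact TN.mono2 hT z h

lemma TN.zero2 (hT : IsTNorm T) {x : ℝ} (hx : x ∈ Set.Icc (0:ℝ) 1) : T x 0 = 0 := by
  have h1 : T x 0 ≤ 0 := by
    have := TN.mono1 hT hx.2 0
    rwa [TN.comm hT 1 0, TN.one hT 0] at this
  have h2 : (0:ℝ) ≤ T x 0 := (TN.mem hT hx (by norm_num)).1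
  linarith

lemma TN.zero1 (hT : IsTNorm T) {x : ℝ} (hx : x ∈ Set.Icc (0:ℝ) 1) : T 0 x = 0 := by
  rw [TN.comm hT]; exact TN.zero2 hT hx

/-- The set whose supremum defines `starT`. -/
def starSet (T : ℝ → ℝ → ℝ) (F L : EReal → ℝ) (t : EReal) : Set ℝ :=
  {r : ℝ | ∃ s u : EReal, s + u = t ∧ r = T (F s) (L u)}

lemma starT_eq (F L : EReal → ℝ) (t : EReal) :
    starT T F L t = sSup (starSet T F L t) := rfl

lemma starSet_nonempty (F L : EReal → ℝ) (t : EReal) : (starSet T F L t).Nonempty :=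
  ⟨T (F t) (L 0), t, 0, add_zero t, rfl⟩

lemma starSet_subset_Icc (hT : IsTNorm T) {F L : EReal → ℝ}
    (hF : ∀ s, F s ∈ Set.Icc (0:ℝ) 1) (hL : ∀ s, L s ∈ Set.Icc (0:ℝ) 1) (t : EReal) :
    starSet T F L t ⊆ Set.Icc (0:ℝ) 1 := by
  rintro r ⟨s, u, -, rfl⟩
  exact TN.mem hT (hF s) (hL u)

lemma starSet_bddAbove (hT : IsTNorm T) {F L : EReal → ℝ}
    (hF : ∀ s, F s ∈ Set.Icc (0:ℝ) 1) (hL : ∀ s, L s ∈ Set.Icc (0:ℝ) 1) (t : EReal) :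
    BddAbove (starSet T F L t) :=
  ⟨1, fun _ hr => (starSet_subset_Icc hT hF hL t hr).2⟩

lemma starT_mem_Icc (hT : IsTNorm T) {F L : EReal → ℝ}
    (hF : ∀ s, F s ∈ Set.Icc (0:ℝ) 1) (hL : ∀ s, L s ∈ Set.Icc (0:ℝ) 1) (t : EReal) :
    starT T F L t ∈ Set.Icc (0:ℝ) 1 := by
  constructor
  · obtain ⟨r, hr⟩ := starSet_nonempty (T := T) F L t
    exact le_trans (starSet_subset_Icc hT hF hL t hr).1
      (le_csSup (starSet_bddAbove hT hF hL t) hr)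
  · exact csSup_le (starSet_nonempty F L t) fun r hr => (starSet_subset_Icc hT hF hL t hr).2

lemma starT_nonneg (hT : IsTNorm T) {F L : EReal → ℝ}
    (hF : ∀ s, F s ∈ Set.Icc (0:ℝ) 1) (hL : ∀ s, L s ∈ Set.Icc (0:ℝ) 1) (t : EReal) :
    0 ≤ starT T F L t := (starT_mem_Icc hT hF hL t).1

lemma EReal.exists_real_of_between {s : EReal} {a b : ℝ} (h1 : (a:EReal) < s)
    (h2 : s < (b:EReal)) : ∃ r : ℝ, s = (r : EReal) := by
  induction s using EReal.rec <;> simp_all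

lemma EReal.add_eq_real {s u : EReal} {x : ℝ} (h : s + u = (x : EReal)) :
    ∃ a b : ℝ, s = (a:EReal) ∧ u = (b:EReal) ∧ a + b = x := by
  induction s using EReal.rec <;> induction u using EReal.rec <;> simp_all
  exact_mod_cast h

/-- From left-continuity of a distribution function, extract values close to `F x` from
real points on the left. -/
lemma distFun_left_approx {F : EReal → ℝ} (hF : IsDistFun F) (x : ℝ) {ε : ℝ} (hε : 0 < ε) :
    ∃ s : ℝ, s < x ∧ F (x : EReal) - ε < F (s : EReal) := by
  have hc := hF.2.2.1 x
  have hne : (𝓝[Set.Iio ((x:EReal))] (x:EReal)).NeBot :=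
    nhdsWithin_Iio_self_neBot' ⟨⊥, by simp⟩
  have h1 : ∀ᶠ s in 𝓝[Set.Iio (x:EReal)] (x:EReal), F (x:EReal) - ε < F s :=
    hc.eventually (eventually_gt_nhds (by linarith))
  have h2 : ∀ᶠ s in 𝓝[Set.Iio (x:EReal)] (x:EReal), ((x - 1 : ℝ) : EReal) < s :=
    Filter.Eventually.filter_mono nhdsWithin_le_nhds
      (eventually_gt_nhds (by exact_mod_cast sub_one_lt x))
  have h3 : ∀ᶠ s in 𝓝[Set.Iio (x:EReal)] (x:EReal), s ∈ Set.Iio (x:EReal) :=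
    eventually_mem_nhdsWithin
  obtain ⟨s, hs1, hs2, hs3⟩ := (h1.and (h2.and h3)).exists
  obtain ⟨r, rfl⟩ := EReal.exists_real_of_between hs2 hs3
  exact ⟨r, by simpa using hs3, hs1⟩

/-- Criterion for left-continuity of a monotone function at a real point. -/
lemma mono_contWithinAt {G : EReal → ℝ} (hG : Monotone G) (x : ℝ)
    (h : ∀ ε : ℝ, 0 < ε → ∃ s : ℝ, s < x ∧ G (x:EReal) - ε < G (s:EReal)) :
    ContinuousWithinAt G (Set.Iio (x:EReal)) (x:EReal) := by
  rw [ContinuousWithinAt, Metric.tendsto_nhds]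
  intro ε hε
  obtain ⟨s, hsx, hs⟩ := h ε hε
  have h2 : ∀ᶠ u in 𝓝[Set.Iio (x:EReal)] (x:EReal), (s:EReal) < u :=
    Filter.Eventually.filter_mono nhdsWithin_le_nhds
      (eventually_gt_nhds (by exact_mod_cast hsx))
  have h3 : ∀ᶠ u in 𝓝[Set.Iio (x:EReal)] (x:EReal), u ∈ Set.Iio (x:EReal) :=
    eventually_mem_nhdsWithin
  filter_upwards [h2, h3] with u hu1 hu2
  have l1 : G (s:EReal) ≤ G u := hG hu1.le
  have l2 : G u ≤ G (x:EReal) := hG hu2.le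
  rw [Real.dist_eq, abs_lt]
  constructor <;> linarith

/-- Distributivity of a left-continuous t-norm over suprema. -/
lemma tnorm_sSup (hT : IsTNorm T) (hTl : LeftContTNorm T) {a : ℝ}
    (ha : a ∈ Set.Icc (0:ℝ) 1) {S : Set ℝ} (hne : S.Nonempty) (hS : S ⊆ Set.Icc (0:ℝ) 1) :
    T a (sSup S) = sSup ((fun b => T a b) '' S) := by
  have hbdd : BddAbove S := ⟨1, fun r hr => (hS hr).2⟩
  have hbddI : BddAbove ((fun b => T a b) '' S) := by
    refine ⟨1, ?_⟩
    rintro r ⟨b, hb, rfl⟩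
    exact (TN.mem hT ha (hS hb)).2
  refine le_antisymm ?_ ?_
  · -- hard direction
    by_cases hc : sSup S ∈ S
    · exact le_csSup hbddI ⟨sSup S, hc, rfl⟩
    · apply le_of_forall_pos_le_add
      intro ε hε
      have hcts := hTl a (sSup S)
      rw [Metric.continuousWithinAt_iff] at hcts
      obtain ⟨δ, hδ, hδ'⟩ := hcts ε hε
      obtain ⟨b, hbS, hb⟩ := exists_lt_of_lt_csSup hne
        (by linarith : sSup S - δ / 2 < sSup S)
      have hblt : b < sSup S := lt_of_le_of_ne (le_csSup hbdd hbS) (fun h => hc (h ▸ hbS))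
      have hmem : (a - δ / 2, b) ∈ Set.Iio a ×ˢ Set.Iio (sSup S) :=
        ⟨by simp; linarith, hblt⟩
      have hdist : dist ((a - δ / 2, b)) ((a, sSup S)) < δ := by
        rw [Prod.dist_eq]
        simp only [Real.dist_eq]
        rw [max_lt_iff]
        constructor
        · rw [abs_lt]; constructor <;> linarith
        · rw [abs_lt]; constructor <;> linarith
      have := hδ' hmem hdist
      rw [Real.dist_eq, abs_lt] at this
      have key : T a (sSup S) - ε < T (a - δ/2) b := by
        simp only [] at this; linarith [this.1]
      have : T (a - δ/2) b ≤ T a b := TN.mono1 hT (by linarith) b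
      have hTab : T a b ≤ sSup ((fun b => T a b) '' S) := le_csSup hbddI ⟨b, hbS, rfl⟩
      linarith
  · apply csSup_le (hne.image _)
    rintro r ⟨b, hb, rfl⟩
    exact TN.mono2 hT a (le_csSup hbdd hb)

end StarTAux

section StarTMain

variable {T : ℝ → ℝ → ℝ}

lemma starT_comm (hT : IsTNorm T) (F L : EReal → ℝ) : starT T F L = starT T L F := by
  funext t
  rw [starT_eq, starT_eq]
  congr 1
  ext r
  constructor
  · rintro ⟨s, u, h, rfl⟩
    exact ⟨u, s, by rw [add_comm]; exact h, TN.comm hT _ _⟩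
  · rintro ⟨s, u, h, rfl⟩
    exact ⟨u, s, by rw [add_comm]; exact h, TN.comm hT _ _⟩

lemma starT_mono_arg (hT : IsTNorm T) {F L K : EReal → ℝ}
    (hF : ∀ s, F s ∈ Set.Icc (0:ℝ) 1) (hL : ∀ s, L s ∈ Set.Icc (0:ℝ) 1)
    (hK : ∀ s, K s ∈ Set.Icc (0:ℝ) 1) (hFL : F ≤ L) :
    starT T F K ≤ starT T L K := by
  intro t
  rw [starT_eq, starT_eq]
  apply csSup_le (starSet_nonempty F K t)
  rintro r ⟨s, u, hsu, rfl⟩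
  calc T (F s) (K u) ≤ T (L s) (K u) := TN.mono1 hT (hFL s) _
    _ ≤ sSup (starSet T L K t) := le_csSup (starSet_bddAbove hT hL hK t) ⟨s, u, hsu, rfl⟩

lemma starT_bot (hT : IsTNorm T) {F L : EReal → ℝ} (hF : IsDistFun F) (hL : IsDistFun L) :
    starT T F L ⊥ = 0 := by
  rw [starT_eq]
  apply le_antisymm
  · apply csSup_le (starSet_nonempty F L ⊥)
    rintro r ⟨s, u, hsu, rfl⟩
    rcases EReal.add_eq_bot_iff.mp hsu with h | h
    · rw [h, hF.2.2.2.1, TN.zero1 hT (hL.2.1 u)]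
    · rw [h, hL.2.2.2.1, TN.zero2 hT (hF.2.1 s)]
  · refine le_csSup (starSet_bddAbove hT hF.2.1 hL.2.1 ⊥) ⟨⊥, 0, by simp, ?_⟩
    rw [hF.2.2.2.1, TN.zero1 hT (hL.2.1 0)]

lemma starT_top (hT : IsTNorm T) {F L : EReal → ℝ} (hF : IsDistFun F) (hL : IsDistFun L) :
    starT T F L ⊤ = 1 := by
  rw [starT_eq]
  apply le_antisymm
  · exact csSup_le (starSet_nonempty F L ⊤)
      fun r hr => (starSet_subset_Icc hT hF.2.1 hL.2.1 ⊤ hr).2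
  · refine le_csSup (starSet_bddAbove hT hF.2.1 hL.2.1 ⊤) ⟨⊤, ⊤, by simp, ?_⟩
    rw [hF.2.2.2.2.1, hL.2.2.2.2.1, TN.one hT 1]

lemma starT_zero (hT : IsTNorm T) {F L : EReal → ℝ} (hF : IsDistFun F) (hL : IsDistFun L) :
    starT T F L 0 = 0 := by
  rw [starT_eq]
  apply le_antisymm
  · apply csSup_le (starSet_nonempty F L 0)
    rintro r ⟨s, u, hsu, rfl⟩
    obtain ⟨a, b, rfl, rfl, hab⟩ := EReal.add_eq_real (by exact_mod_cast hsu)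
    rcases le_or_gt a 0 with h | h
    · have : F (a : EReal) ≤ F 0 := hF.1 (by exact_mod_cast h)
      have h0 : F (a : EReal) = 0 :=
        le_antisymm (by rw [hF.2.2.2.2.2] at this; exact this) (hF.2.1 _).1
      rw [h0, TN.zero1 hT (hL.2.1 _)]
    · have hb : b ≤ 0 := by linarith
      have : L (b : EReal) ≤ L 0 := hL.1 (by exact_mod_cast hb)
      have h0 : L (b : EReal) = 0 :=
        le_antisymm (by rw [hL.2.2.2.2.2] at this; exact this) (hL.2.1 _).1
      rw [h0, TN.zero2 hT (hF.2.1 _)]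
  · refine le_csSup (starSet_bddAbove hT hF.2.1 hL.2.1 0) ⟨0, 0, by simp, ?_⟩
    rw [hF.2.2.2.2.2, TN.zero1 hT (hL.2.1 0)]

lemma starT_mono_t (hT : IsTNorm T) {F L : EReal → ℝ} (hF : IsDistFun F) (hL : IsDistFun L) :
    Monotone (starT T F L) := by
  intro t t' htt'
  rw [starT_eq, starT_eq]
  apply csSup_le (starSet_nonempty F L t)
  rintro r ⟨s, u, hsu, rfl⟩
  have hbdd := starSet_bddAbove hT hF.2.1 hL.2.1 t'
  have hnn : (0:ℝ) ≤ sSup (starSet T F L t') := starT_nonneg hT hF.2.1 hL.2.1 t'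
  induction s using EReal.rec with
  | bot =>
    rw [hF.2.2.2.1, TN.zero1 hT (hL.2.1 u)]; exact hnn
  | top =>
    induction u using EReal.rec with
    | bot => rw [hL.2.2.2.1, TN.zero2 hT (hF.2.1 _)]; exact hnn
    | top =>
      have ht : t = ⊤ := by simpa using hsu.symm
      have ht' : t' = ⊤ := top_le_iff.mp (ht ▸ htt')
      exact le_csSup hbdd ⟨⊤, ⊤, by rw [ht']; simp, rfl⟩
    | coe b =>
      have ht : t = ⊤ := by rw [← hsu]; exact EReal.top_add_coe b
      have ht' : t' = ⊤ := top_le_iff.mp (ht ▸ htt')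
      exact le_csSup hbdd ⟨⊤, (b:EReal), by rw [ht']; exact EReal.top_add_coe b, rfl⟩
  | coe a =>
    induction u using EReal.rec with
    | bot => rw [hL.2.2.2.1, TN.zero2 hT (hF.2.1 _)]; exact hnn
    | top =>
      have ht : t = ⊤ := by rw [← hsu]; exact EReal.coe_add_top a
      have ht' : t' = ⊤ := top_le_iff.mp (ht ▸ htt')
      exact le_csSup hbdd ⟨(a:EReal), ⊤, by rw [ht']; exact EReal.coe_add_top a, rfl⟩
    | coe b =>
      have ht : t = ((a + b : ℝ) : EReal) := by rw [← hsu]; exact (EReal.coe_add a b).symm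
      induction t' using EReal.rec with
      | bot => exact absurd (ht ▸ htt') (by simp)
      | top =>
        calc T (F a) (L b) ≤ T (F ⊤) (L b) := TN.mono1 hT (hF.1 le_top) _
          _ ≤ sSup (starSet T F L ⊤) := le_csSup hbdd ⟨⊤, (b:EReal), EReal.top_add_coe b, rfl⟩
      | coe y =>
        have hab : a + b ≤ y := by rw [ht] at htt'; exact_mod_cast htt'
        have hay : (a : EReal) ≤ ((y - b : ℝ) : EReal) := by
          apply EReal.coe_le_coe_iff.mpr; linarith
        calc T (F a) (L b) ≤ T (F ((y - b:ℝ):EReal)) (L b) := TN.mono1 hT (hF.1 hay) _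
          _ ≤ sSup (starSet T F L (y:EReal)) := le_csSup hbdd
              ⟨((y - b:ℝ):EReal), (b:EReal), by rw [← EReal.coe_add]; norm_num, rfl⟩

end StarTMain
section StarTMain2

variable {T : ℝ → ℝ → ℝ}

lemma H0_mem_Icc : ∀ t, H0 t ∈ Set.Icc (0:ℝ) 1 := by
  intro t
  unfold H0 Hstep
  split <;> norm_num

lemma starT_H0 (hT : IsTNorm T) {F : EReal → ℝ} (hF : IsDistFun F) :
    starT T F H0 = F := by
  funext t
  rw [starT_eq]
  apply le_antisymm
  · apply csSup_le (starSet_nonempty F H0 t)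
    rintro r ⟨s, u, hsu, rfl⟩
    by_cases hu : u ≤ (0:EReal)
    · have : H0 u = 0 := by unfold H0 Hstep; simp [hu]
      rw [this, TN.zero2 hT (hF.2.1 s)]
      exact (hF.2.1 t).1
    · have h1 : H0 u = 1 := by unfold H0 Hstep; simp [hu]
      rw [h1, TN.one hT]
      apply hF.1
      calc s = s + 0 := (add_zero s).symm
        _ ≤ s + u := add_le_add_right (le_of_not_ge hu) s
        _ = t := hsu
  · have hbdd := starSet_bddAbove hT hF.2.1 H0_mem_Icc t
    induction t using EReal.rec with
    | bot =>
      rw [hF.2.2.2.1]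
      exact starT_nonneg hT hF.2.1 H0_mem_Icc ⊥
    | top =>
      rw [hF.2.2.2.2.1]
      refine le_csSup hbdd ⟨⊤, ⊤, by simp, ?_⟩
      have : H0 (⊤:EReal) = 1 := by unfold H0 Hstep; simp
      rw [hF.2.2.2.2.1, this, TN.one hT]
    | coe x =>
      apply le_of_forall_pos_le_add
      intro ε hε
      obtain ⟨s, hsx, hs⟩ := distFun_left_approx hF x hε
      have hmem : F (s:EReal) ∈ starSet T F H0 (x:EReal) := by
        refine ⟨(s:EReal), ((x - s : ℝ):EReal), by rw [← EReal.coe_add]; norm_num, ?_⟩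
        have hlt : ¬ (((x - s:ℝ):EReal) ≤ ((0:ℝ):EReal)) := by
          rw [EReal.coe_le_coe_iff]; push_neg; linarith
        have : H0 ((x - s:ℝ):EReal) = 1 := by unfold H0 Hstep; rw [if_neg hlt]
        rw [this, TN.one hT]
      have := le_csSup hbdd hmem
      linarith

lemma starT_leftCont (hT : IsTNorm T) (hTl : LeftContTNorm T) {F L : EReal → ℝ}
    (hF : IsDistFun F) (hL : IsDistFun L) (x : ℝ) :
    ContinuousWithinAt (starT T F L) (Set.Iio (x:EReal)) (x:EReal) := by
  apply mono_contWithinAt (starT_mono_t hT hF hL)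
  intro ε hε
  have hbdd := starSet_bddAbove hT hF.2.1 hL.2.1 (x:EReal)
  -- pick an element within ε/2 of the sup
  have hlt : starT T F L (x:EReal) - ε / 2 < sSup (starSet T F L (x:EReal)) := by
    rw [starT_eq]; linarith
  obtain ⟨r, hrmem, hr⟩ := exists_lt_of_lt_csSup (starSet_nonempty F L (x:EReal)) hlt
  obtain ⟨s, u, hsu, rfl⟩ := hrmem
  obtain ⟨a, b, rfl, rfl, hab⟩ := EReal.add_eq_real hsu
  set A := F ((a:ℝ):EReal) with hA
  set B := L ((b:ℝ):EReal) with hB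
  by_cases hz : A = 0 ∨ B = 0
  · -- the chosen element is zero; the sup is small
    have hTz : T A B = 0 := by
      rcases hz with h | h
      · rw [h]; exact TN.zero1 hT (hL.2.1 _)
      · rw [h]; exact TN.zero2 hT (hF.2.1 _)
    refine ⟨x - 1, by linarith, ?_⟩
    have h1 : (0:ℝ) ≤ starT T F L ((x - 1:ℝ):EReal) :=
      starT_nonneg hT hF.2.1 hL.2.1 _
    rw [hTz] at hr
    linarith
  · push_neg at hz
    have hA0 : 0 < A := lt_of_le_of_ne (hF.2.1 _).1 (Ne.symm hz.1)
    have hB0 : 0 < B := lt_of_le_of_ne (hL.2.1 _).1 (Ne.symm hz.2)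
    have hcts := hTl A B
    rw [Metric.continuousWithinAt_iff] at hcts
    obtain ⟨δ, hδ, hδ'⟩ := hcts (ε/2) (by linarith)
    -- approximate A and B from the left
    obtain ⟨s', hs'a, hs'⟩ := distFun_left_approx hF a (by positivity : (0:ℝ) < δ/2)
    obtain ⟨u', hu'b, hu'⟩ := distFun_left_approx hL b (by positivity : (0:ℝ) < δ/2)
    have hmem : (A - δ/2, B - δ/2) ∈ Set.Iio A ×ˢ Set.Iio B :=
      ⟨by simp; linarith, by simp; linarith⟩
    have hdist : dist ((A - δ/2, B - δ/2)) ((A, B)) < δ := by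
      rw [Prod.dist_eq]
      simp only [Real.dist_eq]
      rw [max_lt_iff]
      constructor <;> (rw [abs_lt]; constructor <;> linarith)
    have hTd := hδ' hmem hdist
    rw [Real.dist_eq, abs_lt] at hTd
    refine ⟨s' + u', by linarith, ?_⟩
    have hval : T (A - δ/2) (B - δ/2) ≤ T (F ((s':ℝ):EReal)) (L ((u':ℝ):EReal)) := by
      calc T (A - δ/2) (B - δ/2) ≤ T (F ((s':ℝ):EReal)) (B - δ/2) :=
            TN.mono1 hT (by linarith) _
        _ ≤ T (F ((s':ℝ):EReal)) (L ((u':ℝ):EReal)) := TN.mono2 hT _ (by linarith)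
    have hmem2 : T (F ((s':ℝ):EReal)) (L ((u':ℝ):EReal))
        ∈ starSet T F L ((s' + u' : ℝ):EReal) :=
      ⟨((s':ℝ):EReal), ((u':ℝ):EReal), by rw [← EReal.coe_add], rfl⟩
    have hle : T (F ((s':ℝ):EReal)) (L ((u':ℝ):EReal)) ≤ starT T F L ((s' + u':ℝ):EReal) :=
      le_csSup (starSet_bddAbove hT hF.2.1 hL.2.1 _) hmem2
    have : starT T F L ((x:ℝ):EReal) = sSup (starSet T F L (x:EReal)) := starT_eq F L _
    linarith [hTd.1]

lemma starT_isDistFun (hT : IsTNorm T) (hTl : LeftContTNorm T) {F L : EReal → ℝ}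
    (hF : IsDistFun F) (hL : IsDistFun L) : IsDistFun (starT T F L) :=
  ⟨starT_mono_t hT hF hL, starT_mem_Icc hT hF.2.1 hL.2.1,
    starT_leftCont hT hTl hF hL, starT_bot hT hF hL, starT_top hT hF hL,
    starT_zero hT hF hL⟩

end StarTMain2
section StarTAssoc

variable {T : ℝ → ℝ → ℝ}

lemma starT_assoc (hT : IsTNorm T) (hTl : LeftContTNorm T) {F L K : EReal → ℝ}
    (hF : IsDistFun F) (hL : IsDistFun L) (hK : IsDistFun K) :
    starT T F (starT T L K) = starT T (starT T F L) K := by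
  funext t
  set C : Set ℝ :=
    {r | ∃ s v w : EReal, s + (v + w) = t ∧ r = T (F s) (T (L v) (K w))} with hC
  have hCsub : C ⊆ Set.Icc (0:ℝ) 1 := by
    rintro r ⟨s, v, w, -, rfl⟩
    exact TN.mem hT (hF.2.1 s) (TN.mem hT (hL.2.1 v) (hK.2.1 w))
  have hCbdd : BddAbove C := ⟨1, fun r hr => (hCsub hr).2⟩
  have hCne : C.Nonempty := ⟨T (F t) (T (L 0) (K 0)), t, 0, 0, by simp, rfl⟩
  have hHmem := starT_mem_Icc hT hL.2.1 hK.2.1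
  have hGmem := starT_mem_Icc hT hF.2.1 hL.2.1
  have h1 : starT T F (starT T L K) t = sSup C := by
    rw [starT_eq]
    apply le_antisymm
    · apply csSup_le (starSet_nonempty F (starT T L K) t)
      rintro r ⟨s, u, hsu, rfl⟩
      have hrw : T (F s) (starT T L K u)
          = sSup ((fun b => T (F s) b) '' starSet T L K u) := by
        rw [starT_eq]
        exact tnorm_sSup hT hTl (hF.2.1 s) (starSet_nonempty L K u)
          (starSet_subset_Icc hT hL.2.1 hK.2.1 u)
      rw [hrw]
      apply csSup_le ((starSet_nonempty L K u).image _)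
      rintro r ⟨b, ⟨v, w, hvw, rfl⟩, rfl⟩
      exact le_csSup hCbdd ⟨s, v, w, by rw [hvw, hsu], rfl⟩
    · apply csSup_le hCne
      rintro r ⟨s, v, w, h, rfl⟩
      have hm : T (L v) (K w) ∈ starSet T L K (v + w) := ⟨v, w, rfl, rfl⟩
      have h1 : T (F s) (T (L v) (K w)) ≤ T (F s) (starT T L K (v + w)) := by
        apply TN.mono2 hT
        rw [starT_eq]
        exact le_csSup (starSet_bddAbove hT hL.2.1 hK.2.1 (v + w)) hm
      refine le_trans h1 (le_csSup ?_ ⟨s, v + w, h, rfl⟩)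
      exact starSet_bddAbove hT hF.2.1 hHmem t
  have h2 : starT T (starT T F L) K t = sSup C := by
    rw [starT_eq]
    apply le_antisymm
    · apply csSup_le (starSet_nonempty (starT T F L) K t)
      rintro r ⟨s', w, hsw, rfl⟩
      have hrw : T (starT T F L s') (K w)
          = sSup ((fun b => T (K w) b) '' starSet T F L s') := by
        rw [TN.comm hT, starT_eq]
        exact tnorm_sSup hT hTl (hK.2.1 w) (starSet_nonempty F L s')
          (starSet_subset_Icc hT hF.2.1 hL.2.1 s')
      rw [hrw]
      apply csSup_le ((starSet_nonempty F L s').image _)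
      rintro r ⟨b, ⟨s, v, hsv, rfl⟩, rfl⟩
      refine le_csSup hCbdd ⟨s, v, w, ?_, ?_⟩
      · rw [← add_assoc, hsv, hsw]
      · show T (K w) (T (F s) (L v)) = T (F s) (T (L v) (K w))
        rw [TN.comm hT (K w) (T (F s) (L v)), ← TN.assoc hT]
    · apply csSup_le hCne
      rintro r ⟨s, v, w, h, rfl⟩
      have hm : T (F s) (L v) ∈ starSet T F L (s + v) := ⟨s, v, rfl, rfl⟩
      have h1 : T (F s) (T (L v) (K w)) ≤ T (starT T F L (s + v)) (K w) := by
        rw [TN.assoc hT]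
        apply TN.mono1 hT
        rw [starT_eq]
        exact le_csSup (starSet_bddAbove hT hF.2.1 hL.2.1 (s + v)) hm
      refine le_trans h1 (le_csSup ?_ ⟨s + v, w, by rw [add_assoc, h], rfl⟩)
      exact starSet_bddAbove hT hGmem hK.2.1 t
  rw [h1, h2]

end StarTAssoc

/-- For a left-continuous triangular norm `T`, the operation `⋆_T` is a triangle function. -/
theorem stmt1 (T : ℝ → ℝ → ℝ) (hT : IsTNorm T) (hTl : LeftContTNorm T) :
    IsTriangleFn (starT T) := by
  refine ⟨?_, ?_, ?_, ?_, ?_⟩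
  · intro F L hF hL
    exact starT_isDistFun hT hTl hF hL
  · intro F L _ _
    exact starT_comm hT F L
  · intro F L K hF hL hK
    exact starT_assoc hT hTl hF hL hK
  · intro F hF
    exact starT_H0 hT hF
  · intro F L K hF hL hK hFL
    exact starT_mono_arg hT hF.2.1 hL.2.1 hK.2.1 hFL
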